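/- arXiv:1510.08207 — 2 statements merged into one kernel-verified Lean document; each statement's English description precedes it below -/
import Mathlib

section
/- Let R be a noncommutative finite (not necessarily unital) ring. Then |Cent(R)| = 4 if and only if d(R) = 5/8. -/
/-- The centralizer of `r` in a (not necessarily unital) ring: `{s | r*s = s*r}`. -/
def rCentralizer {R : Type*} [NonUnitalRing R] (r : R) : Set R := {s | r * s = s * r}

/-- The set of all centralizers of elements of `R`. -/
def Cent (R : Type*) [NonUnitalRing R] : Set (Set R) :=
  Set.range (fun r : R => rCentralizer r)

/-- The center of a (not necessarily unital) ring, as a set. -/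
def rCenter (R : Type*) [NonUnitalRing R] : Set R := {s | ∀ r : R, r * s = s * r}

/-- The commutativity degree of a finite ring: `d(R) = (1/|R|²) ∑_{r ∈ R} |C(r)|`. -/
noncomputable def commDeg (R : Type*) [NonUnitalRing R] [Fintype R] : ℚ :=
  (∑ r : R, ((rCentralizer r).ncard : ℚ)) / ((Fintype.card R : ℚ)) ^ 2

namespace FourCentAux

variable {R : Type*} [NonUnitalRing R]

theorem mem_rCentralizer {r s : R} : s ∈ rCentralizer r ↔ r * s = s * r := Iff.rfl

theorem self_mem_rCentralizer (r : R) : r ∈ rCentralizer r := rfl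

theorem center_subset_rCentralizer (r : R) : rCenter R ⊆ rCentralizer r :=
  fun _ hz => hz r

/-- The centralizer as an additive subgroup. -/
def CS (r : R) : AddSubgroup R where
  carrier := rCentralizer r
  zero_mem' := show r * 0 = 0 * r by rw [mul_zero, zero_mul]
  add_mem' := by
    intro a b ha hb
    have ha' : r * a = a * r := ha
    have hb' : r * b = b * r := hb
    show r * (a + b) = (a + b) * r
    rw [mul_add, add_mul, ha', hb']
  neg_mem' := by
    intro a ha
    have ha' : r * a = a * r := ha
    show r * (-a) = (-a) * r
    rw [mul_neg, neg_mul, ha']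

theorem mem_CS {r s : R} : s ∈ CS r ↔ r * s = s * r := Iff.rfl

/-- The center as an additive subgroup. -/
def ZS (R : Type*) [NonUnitalRing R] : AddSubgroup R where
  carrier := rCenter R
  zero_mem' := by intro r; rw [mul_zero, zero_mul]
  add_mem' := by
    intro a b ha hb r
    rw [mul_add, add_mul, ha r, hb r]
  neg_mem' := by
    intro a ha r
    rw [mul_neg, neg_mul, ha r]

theorem mem_ZS {s : R} : s ∈ ZS R ↔ s ∈ rCenter R := Iff.rfl

theorem zero_mem_rCenter : (0 : R) ∈ rCenter R := (ZS R).zero_mem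

theorem rCenter_sub_mem {a b : R} (ha : a ∈ rCenter R) (hb : b ∈ rCenter R) :
    a - b ∈ rCenter R := (ZS R).sub_mem ha hb

theorem rCenter_add_mem {a b : R} (ha : a ∈ rCenter R) (hb : b ∈ rCenter R) :
    a + b ∈ rCenter R := (ZS R).add_mem ha hb

theorem exists_noncomm_of_not_central {r : R} (h : r ∉ rCenter R) :
    ∃ b : R, r * b ≠ b * r := by
  by_contra hc
  push_neg at hc
  exact h (fun t => (hc t).symm)

theorem not_central_left {r b : R} (h : r * b ≠ b * r) : r ∉ rCenter R :=
  fun hz => h (hz b).symm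

theorem not_central_right {r b : R} (h : r * b ≠ b * r) : b ∉ rCenter R :=
  fun hz => h (hz r)

theorem not_central_add {r b : R} (h : r * b ≠ b * r) : r + b ∉ rCenter R := by
  intro hz
  apply h
  have := hz r  -- r * (r+b) = (r+b) * r
  rw [mul_add, add_mul] at this
  exact add_left_cancel this

theorem not_central_sub {r b : R} (h : r * b ≠ b * r) : b - r ∉ rCenter R := by
  intro hz
  apply h
  have h2 : r * (b - r) = (b - r) * r := hz r
  rw [mul_sub, sub_mul] at h2
  exact sub_left_injective h2
/-- The coset `x + Z` of the center. -/
def cos (x : R) : Set R := (fun z => x + z) '' rCenter R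

theorem mem_cos {x g : R} : g ∈ cos x ↔ g - x ∈ rCenter R := by
  constructor
  · rintro ⟨z, hz, rfl⟩
    rwa [add_sub_cancel_left]
  · intro h
    exact ⟨g - x, h, by show x + (g - x) = g; rw [add_sub_cancel]⟩

theorem ncard_cos (x : R) : (cos x).ncard = (rCenter R).ncard :=
  Set.ncard_image_of_injective _ (add_right_injective x)

theorem disjoint_cos {x y : R} (h : y - x ∉ rCenter R) : Disjoint (cos x) (cos y) := by
  rw [Set.disjoint_left]
  intro g hgx hgy
  rw [mem_cos] at hgx hgy
  exact h (by simpa using rCenter_sub_mem hgx hgy : _)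

theorem disjoint_center_cos {x : R} (h : x ∉ rCenter R) : Disjoint (rCenter R) (cos x) := by
  rw [Set.disjoint_left]
  intro g hg hgx
  rw [mem_cos] at hgx
  exact h (by simpa using rCenter_sub_mem hg hgx : _)

theorem cos_subset_rCentralizer {r : R} : cos r ⊆ rCentralizer r := by
  rintro g hg
  rw [mem_cos] at hg
  have : g = r + (g - r) := by abel
  rw [mem_rCentralizer, this, mul_add, add_mul, hg r]

variable [Fintype R]

theorem z_pos : 0 < (rCenter R).ncard :=
  (Set.ncard_pos (Set.toFinite _)).mpr ⟨0, zero_mem_rCenter⟩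

theorem eq_univ_of_ncard {s : Set R} (hs : Fintype.card R ≤ s.ncard) : s = Set.univ := by
  apply Set.eq_of_subset_of_ncard_le (Set.subset_univ s)
  rwa [Set.ncard_univ, Nat.card_eq_fintype_card]

/-- Under `|R| = 4|Z|`, for any noncommuting pair the four cosets cover `R`. -/
theorem cover4 (hkey : Fintype.card R = 4 * (rCenter R).ncard)
    {a b : R} (hab : a * b ≠ b * a) :
    rCenter R ∪ cos a ∪ cos b ∪ cos (a + b) = Set.univ := by
  have ha : a ∉ rCenter R := not_central_left hab
  have hb : b ∉ rCenter R := not_central_right hab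
  have hba : b - a ∉ rCenter R := not_central_sub hab
  have hab' : a + b ∉ rCenter R := not_central_add hab
  have haab : a + b - a ∉ rCenter R := by rwa [add_sub_cancel_left]
  have hbab : a + b - b ∉ rCenter R := by rwa [add_sub_cancel_right]
  apply eq_univ_of_ncard
  rw [Set.ncard_union_eq, Set.ncard_union_eq, Set.ncard_union_eq, ncard_cos, ncard_cos,
    ncard_cos, hkey]
  · ring_nf
    omega
  · exact disjoint_center_cos ha
  · exact Set.disjoint_union_left.mpr ⟨disjoint_center_cos hb, disjoint_cos hba⟩
  · exact Set.disjoint_union_left.mpr ⟨Set.disjoint_union_left.mpr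
      ⟨disjoint_center_cos hab', disjoint_cos haab⟩, disjoint_cos hbab⟩

/-- Under `|R| = 4|Z|`, the centralizer of a noncentral element is `Z ∪ (r + Z)`. -/
theorem rCentralizer_eq_of_noncentral (hkey : Fintype.card R = 4 * (rCenter R).ncard)
    {r b : R} (hrb : r * b ≠ b * r) :
    rCentralizer r = rCenter R ∪ cos r := by
  apply Set.Subset.antisymm
  · intro t ht
    have hcov := cover4 hkey hrb
    have htu : t ∈ rCenter R ∪ cos r ∪ cos b ∪ cos (r + b) := by
      rw [hcov]; trivial
    rcases htu with ((h1 | h2) | h3) | h4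
    · exact Or.inl h1
    · exact Or.inr h2
    · exfalso
      rw [mem_cos] at h3
      apply hrb
      have hb' : b = t - (t - b) := by abel
      have : b ∈ CS r := by
        rw [hb']
        exact (CS r).sub_mem ht (center_subset_rCentralizer r h3)
      exact this
    · exfalso
      rw [mem_cos] at h4
      apply hrb
      have hb' : b = t - (t - (r + b)) - r := by abel
      have : b ∈ CS r := by
        rw [hb']
        exact (CS r).sub_mem
          ((CS r).sub_mem ht (center_subset_rCentralizer r h4))
          (self_mem_rCentralizer r)
      exact this
  · exact Set.union_subset (center_subset_rCentralizer r) cos_subset_rCentralizer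

theorem ncard_rCentralizer_of_noncentral (hkey : Fintype.card R = 4 * (rCenter R).ncard)
    {r : R} (hr : r ∉ rCenter R) :
    (rCentralizer r).ncard = 2 * (rCenter R).ncard := by
  obtain ⟨b, hb⟩ := exists_noncomm_of_not_central hr
  rw [rCentralizer_eq_of_noncentral hkey hb,
    Set.ncard_union_eq (disjoint_center_cos hr), ncard_cos]
  omega

theorem rCentralizer_eq_univ_of_central {r : R} (h : r ∈ rCenter R) :
    rCentralizer r = Set.univ := by
  ext s
  simp only [Set.mem_univ, iff_true]
  exact (h s).symm

theorem rCentralizer_congr {r r' : R} (h : r' - r ∈ rCenter R) :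
    rCentralizer r = rCentralizer r' := by
  have key : ∀ u v : R, v - u ∈ rCenter R → rCentralizer u ⊆ rCentralizer v := by
    intro u v huv t ht
    have ht' : u * t = t * u := ht
    show v * t = t * v
    have hv : v = u + (v - u) := by abel
    rw [hv, add_mul, mul_add, ht', huv t]
  apply Set.Subset.antisymm (key r r' h)
  apply key r' r
  have : r - r' = -(r' - r) := by abel
  rw [this]
  exact (ZS R).neg_mem h

/-- Under `|R| = 4|Z|` and noncommutativity, `|Cent R| = 4`. -/
theorem ncard_Cent_eq_four (hkey : Fintype.card R = 4 * (rCenter R).ncard)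
    (h : ∃ x y : R, x * y ≠ y * x) : (Cent R).ncard = 4 := by
  obtain ⟨a, b, hab⟩ := h
  have hCent : Cent R = {Set.univ, rCentralizer a, rCentralizer b, rCentralizer (a + b)} := by
    ext S
    constructor
    · rintro ⟨r, rfl⟩
      have hr : r ∈ rCenter R ∪ cos a ∪ cos b ∪ cos (a + b) := by
        rw [cover4 hkey hab]; trivial
      rcases hr with ((h1 | h2) | h3) | h4
      · exact Or.inl (rCentralizer_eq_univ_of_central h1)
      · exact Or.inr (Or.inl (rCentralizer_congr (mem_cos.mp h2)).symm)
      · exact Or.inr (Or.inr (Or.inl (rCentralizer_congr (mem_cos.mp h3)).symm))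
      · exact Or.inr (Or.inr (Or.inr (rCentralizer_congr (mem_cos.mp h4)).symm))
    · rintro (rfl | rfl | rfl | rfl)
      · exact ⟨0, rCentralizer_eq_univ_of_central zero_mem_rCenter⟩
      · exact ⟨a, rfl⟩
      · exact ⟨b, rfl⟩
      · exact ⟨a + b, rfl⟩
  -- distinctness witnesses
  have hbA : b ∉ rCentralizer a := hab
  have haB : a ∉ rCentralizer b := fun hh => hab ((mem_rCentralizer.mp hh).symm)
  have haAB : a ∉ rCentralizer (a + b) := by
    intro hh
    have : (a + b) * a = a * (a + b) := hh
    rw [add_mul, mul_add] at this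
    exact hab (add_left_cancel this).symm
  have hbAB : b ∉ rCentralizer (a + b) := by
    intro hh
    have : (a + b) * b = b * (a + b) := hh
    rw [add_mul, mul_add] at this
    exact hab (add_right_cancel this)
  have haA : a ∈ rCentralizer a := self_mem_rCentralizer a
  have hbB : b ∈ rCentralizer b := self_mem_rCentralizer b
  have ne1 : Set.univ ≠ rCentralizer a := fun e => hbA (e ▸ trivial)
  have ne2 : Set.univ ≠ rCentralizer b := fun e => haB (e ▸ trivial)
  have ne3 : Set.univ ≠ rCentralizer (a + b) := fun e => haAB (e ▸ trivial)
  have ne4 : rCentralizer a ≠ rCentralizer b := fun e => haB (e ▸ haA)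
  have ne5 : rCentralizer a ≠ rCentralizer (a + b) := fun e => haAB (e ▸ haA)
  have ne6 : rCentralizer b ≠ rCentralizer (a + b) := fun e => hbAB (e ▸ hbB)
  rw [hCent]
  rw [Set.ncard_insert_of_notMem (by simp [ne1, ne2, ne3]),
    Set.ncard_insert_of_notMem (by simp [ne4, ne5]),
    Set.ncard_insert_of_notMem (by simp [ne6]),
    Set.ncard_singleton]

open Classical in
theorem card_center_filter :
    (Finset.univ.filter (· ∈ rCenter R)).card = (rCenter R).ncard := by
  classical
  rw [Set.ncard_eq_toFinset_card']
  congr 1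
  exact Set.filter_mem_univ_eq_toFinset _

/-- Under `|R| = 4|Z|` and noncommutativity, `d(R) = 5/8`. -/
theorem commDeg_eq (hkey : Fintype.card R = 4 * (rCenter R).ncard)
    (h : ∃ x y : R, x * y ≠ y * x) : commDeg R = 5 / 8 := by
  classical
  set z := (rCenter R).ncard with hz
  set n := Fintype.card R with hn
  have hsum : ∑ r : R, ((rCentralizer r).ncard : ℚ)
      = ∑ r : R, (if r ∈ rCenter R then (n : ℚ) else (2 * z : ℚ)) := by
    apply Finset.sum_congr rfl
    intro r _
    by_cases hr : r ∈ rCenter R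
    · rw [if_pos hr, rCentralizer_eq_univ_of_central hr, Set.ncard_univ,
        Nat.card_eq_fintype_card]
    · rw [if_neg hr, ncard_rCentralizer_of_noncentral hkey hr]
      push_cast
      ring
  have hfilter : (Finset.univ.filter (· ∈ rCenter R)).card = z := card_center_filter
  have hfilter' : (Finset.univ.filter (¬ · ∈ rCenter R)).card = n - z := by
    have := Finset.card_filter_add_card_filter_not
      (s := (Finset.univ : Finset R)) (p := (· ∈ rCenter R))
    rw [Finset.card_univ] at this
    omega
  rw [commDeg, hsum, Finset.sum_ite, Finset.sum_const, Finset.sum_const, hfilter, hfilter']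
  have hzpos : 0 < z := z_pos
  have hzq : (0:ℚ) < z := by exact_mod_cast hzpos
  have hnz : n - z = 3 * z := by omega
  rw [hnz]
  simp only [nsmul_eq_mul]
  have hcard : (Fintype.card R : ℚ) = 4 * z := by rw [← hn, hkey]; push_cast; ring
  rw [hcard]
  push_cast
  field_simp
  ring

theorem comm_decomp {u v z1 z2 : R} (h1 : z1 ∈ rCenter R) (h2 : z2 ∈ rCenter R)
    (huv : u * v = v * u) : (u + z1) * (v + z2) = (v + z2) * (u + z1) := by
  have e1 : u * z2 = z2 * u := h2 u
  have e2 : z1 * v = v * z1 := (h1 v).symm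
  have e3 : z1 * z2 = z2 * z1 := h2 z1
  simp only [mul_add, add_mul]
  rw [huv, e1, e2, e3]
  abel

theorem comm_nsmul (x : R) (j k : ℕ) : (j • x) * (k • x) = (k • x) * (j • x) := by
  rw [smul_mul_assoc, smul_mul_assoc, mul_smul_comm, mul_smul_comm, smul_comm]

theorem comm_of_cover {x : R}
    (hcov : ∀ g : R, ∃ (k : ℕ) (w : R), w ∈ rCenter R ∧ g = k • x + w) :
    ∀ a b : R, a * b = b * a := by
  intro a b
  obtain ⟨j, z1, hz1, rfl⟩ := hcov a
  obtain ⟨k, z2, hz2, rfl⟩ := hcov b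
  exact comm_decomp hz1 hz2 (comm_nsmul x j k)

theorem mem_cases_of_union_center_cos {g x : R} (hg : g ∈ rCenter R ∪ cos x) :
    ∃ (k : ℕ) (w : R), w ∈ rCenter R ∧ g = k • x + w := by
  rcases hg with hg | hg
  · exact ⟨0, g, hg, by simp⟩
  · rw [mem_cos] at hg
    exact ⟨1, g - x, hg, by rw [one_smul]; abel⟩

/-- From `d(R) = 5/8` and noncommutativity, `|R| = 4 |Z|`. -/
theorem key_of_commDeg (hd : commDeg R = 5 / 8) (h : ∃ x y : R, x * y ≠ y * x) :
    Fintype.card R = 4 * (rCenter R).ncard := by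
  classical
  obtain ⟨a, b, hab⟩ := h
  set z := (rCenter R).ncard with hzdef
  set n := Fintype.card R with hndef
  have hzpos : 0 < z := z_pos
  have hnpos : 0 < n := Fintype.card_pos
  -- the sum as a natural number
  set S : ℕ := ∑ r : R, (rCentralizer r).ncard with hS
  have hdq : (S : ℚ) / (n : ℚ) ^ 2 = 5 / 8 := by
    rw [← hd, commDeg]
    push_cast [hS]
    rfl
  have h8S : S * 8 = 5 * n ^ 2 := by
    have hnq : (n : ℚ) ≠ 0 := by positivity
    field_simp at hdq
    rw [mul_comm 5]
    exact_mod_cast hdq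
  -- bound each term
  have hbound : ∀ r : R, r ∉ rCenter R → 2 * (rCentralizer r).ncard ≤ n := by
    intro r hr
    have hdvd : (rCentralizer r).ncard ∣ n := by
      have h1 := AddSubgroup.card_addSubgroup_dvd_card (CS r)
      have h2 : Nat.card (CS r) = (rCentralizer r).ncard := by
        rw [← Nat.card_coe_set_eq]
        rfl
      rwa [h2, Nat.card_eq_fintype_card] at h1
    have hne : (rCentralizer r).ncard ≠ n := by
      intro he
      have : rCentralizer r = Set.univ := eq_univ_of_ncard (le_of_eq he.symm)
      apply hr
      intro t
      have : t ∈ rCentralizer r := this ▸ trivial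
      exact (mem_rCentralizer.mp this).symm
    obtain ⟨k, hk⟩ := hdvd
    rcases Nat.lt_or_ge k 2 with hk2 | hk2
    · interval_cases k <;> omega
    · calc 2 * (rCentralizer r).ncard ≤ (rCentralizer r).ncard * k := by nlinarith
        _ = n := hk.symm
  have hcentral : ∀ r : R, r ∈ rCenter R → (rCentralizer r).ncard = n := by
    intro r hr
    rw [rCentralizer_eq_univ_of_central hr, Set.ncard_univ, Nat.card_eq_fintype_card]
  -- 2S ≤ 2zn + (n-z)n
  have hfilter : (Finset.univ.filter (· ∈ rCenter R)).card = z := card_center_filter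
  have hfilter' : (Finset.univ.filter (¬ · ∈ rCenter R)).card = n - z := by
    have := Finset.card_filter_add_card_filter_not
      (s := (Finset.univ : Finset R)) (p := (· ∈ rCenter R))
    rw [Finset.card_univ] at this
    omega
  have h2S : 2 * S ≤ 2 * z * n + (n - z) * n := by
    have : 2 * S = ∑ r : R, 2 * (rCentralizer r).ncard := by
      rw [hS, Finset.mul_sum]
    rw [this]
    calc ∑ r : R, 2 * (rCentralizer r).ncard
        ≤ ∑ r : R, (if r ∈ rCenter R then 2 * n else n) := by
          apply Finset.sum_le_sum
          intro r _
          by_cases hr : r ∈ rCenter R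
          · rw [if_pos hr, hcentral r hr]
          · rw [if_neg hr]; exact hbound r hr
      _ = 2 * z * n + (n - z) * n := by
          rw [Finset.sum_ite, Finset.sum_const, Finset.sum_const, hfilter, hfilter',
            smul_eq_mul, smul_eq_mul]
          ring
  have hzn : z ≤ n := by
    have : (rCenter R).ncard ≤ (Set.univ : Set R).ncard :=
      Set.ncard_le_ncard (Set.subset_univ _) (Set.toFinite _)
    rwa [Set.ncard_univ, Nat.card_eq_fintype_card] at this
  -- deduce n ≤ 4z
  have hn4z : n ≤ 4 * z := by
    set w := n - z with hwdef
    have hzw : z + w = n := by omega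
    have hnn : n ^ 2 = z * n + w * n := by rw [← hzw]; ring
    have h10 : 10 * n ^ 2 ≤ 16 * (z * n) + 8 * (w * n) := by
      have h2S' : 2 * S ≤ 2 * (z * n) + w * n := by linarith [h2S]
      linarith [h8S, h2S']
    have hw3 : w * n ≤ (3 * z) * n := by linarith [h10, hnn]
    have : w ≤ 3 * z := Nat.le_of_mul_le_mul_right hw3 hnpos
    omega
  -- z divides n
  have hzdvd : z ∣ n := by
    have h1 := AddSubgroup.card_addSubgroup_dvd_card (ZS R)
    have h2 : Nat.card (ZS R) = (rCenter R).ncard := by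
      rw [← Nat.card_coe_set_eq]
      rfl
    rw [h2, Nat.card_eq_fintype_card] at h1
    exact h1
  obtain ⟨m, hm⟩ := hzdvd
  have hm4 : m ≤ 4 := by
    rw [hm] at hn4z
    have : z * m ≤ z * 4 := by linarith
    exact Nat.le_of_mul_le_mul_left this hzpos
  have hm1 : 1 ≤ m := by
    rcases Nat.eq_zero_or_pos m with h0 | h0
    · subst h0; rw [Nat.mul_zero] at hm; omega
    · exact h0
  -- rule out m = 1, 2, 3
  have ha : a ∉ rCenter R := not_central_left hab
  interval_cases m
  · -- m = 1 : center is everything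
    exfalso
    have : rCenter R = Set.univ := by
      apply eq_univ_of_ncard
      omega
    exact ha (this ▸ trivial)
  · -- m = 2 : R = Z ∪ (a + Z), so commutative
    exfalso
    have hcov : rCenter R ∪ cos a = Set.univ := by
      apply eq_univ_of_ncard
      have hd1 := disjoint_center_cos ha
      rw [Set.ncard_union_eq hd1, ncard_cos]
      omega
    apply hab
    apply comm_of_cover (x := a)
    intro g
    apply mem_cases_of_union_center_cos
    rw [hcov]
    trivial
  · -- m = 3
    exfalso
    by_cases h2a : a + a ∈ rCenter R
    · -- pick y outside Z ∪ cos a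
      have hsmall : (rCenter R ∪ cos a).ncard < n := by
        apply lt_of_le_of_lt (Set.ncard_union_le _ _)
        rw [ncard_cos]
        omega
      have : ∃ y : R, y ∉ rCenter R ∪ cos a := by
        by_contra hc
        push_neg at hc
        have : (Set.univ : Set R) ⊆ rCenter R ∪ cos a := fun t _ => hc t
        have := Set.ncard_le_ncard this (Set.toFinite _)
        rw [Set.ncard_univ, Nat.card_eq_fintype_card] at this
        omega
      obtain ⟨y, hy⟩ := this
      rw [Set.mem_union, not_or, mem_cos] at hy
      obtain ⟨hy1, hy2⟩ := hy
      have hcov : rCenter R ∪ cos a ∪ cos y = Set.univ := by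
        apply eq_univ_of_ncard
        rw [Set.ncard_union_eq, Set.ncard_union_eq (disjoint_center_cos ha),
          ncard_cos, ncard_cos]
        · omega
        · exact Set.disjoint_union_left.mpr ⟨disjoint_center_cos hy1, disjoint_cos hy2⟩
      -- now a + y lands nowhere
      have hmem : a + y ∈ rCenter R ∪ cos a ∪ cos y := by rw [hcov]; trivial
      rcases hmem with (h1 | h2) | h3
      · -- a + y central and a + a central ⇒ y - a central
        apply hy2
        have : y - a = (a + y) - (a + a) := by abel
        rw [this]
        exact rCenter_sub_mem h1 h2a
      · rw [mem_cos] at h2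
        apply hy1
        have : y = a + y - a := by abel
        rwa [this]
      · rw [mem_cos] at h3
        apply ha
        have : a = a + y - y := by abel
        rwa [this]
    · -- cosets Z, a+Z, 2a+Z cover; commutative
      have h2a' : a + a - a ∉ rCenter R := by rwa [add_sub_cancel_left]
      have hcov : rCenter R ∪ cos a ∪ cos (a + a) = Set.univ := by
        apply eq_univ_of_ncard
        rw [Set.ncard_union_eq, Set.ncard_union_eq (disjoint_center_cos ha),
          ncard_cos, ncard_cos]
        · omega
        · exact Set.disjoint_union_left.mpr ⟨disjoint_center_cos h2a, disjoint_cos h2a'⟩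
      apply hab
      apply comm_of_cover (x := a)
      intro g
      have hg : g ∈ rCenter R ∪ cos a ∪ cos (a + a) := by rw [hcov]; trivial
      rcases hg with (h1 | h2) | h3
      · exact ⟨0, g, h1, by simp⟩
      · rw [mem_cos] at h2
        exact ⟨1, g - a, h2, by rw [one_smul]; abel⟩
      · rw [mem_cos] at h3
        exact ⟨2, g - (a + a), h3, by rw [two_smul]; abel⟩
  · -- m = 4 : done
    omega

section CoverLemma

variable {G : Type*} [AddCommGroup G]

theorem exists_not_mem {X : AddSubgroup G} (hX : X ≠ ⊤) : ∃ p, p ∉ X := by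
  by_contra hc
  push_neg at hc
  exact hX (AddSubgroup.eq_top_iff' X |>.mpr hc)

theorem no_two_cover {X Y : AddSubgroup G} (hX : X ≠ ⊤) (hY : Y ≠ ⊤) :
    ¬ (∀ g : G, g ∈ X ∨ g ∈ Y) := by
  intro hc
  obtain ⟨p, hp⟩ := exists_not_mem hX
  obtain ⟨q, hq⟩ := exists_not_mem hY
  have hpY : p ∈ Y := (hc p).resolve_left hp
  have hqX : q ∈ X := (hc q).resolve_right hq
  rcases hc (p + q) with h | h
  · exact hp (by simpa using X.sub_mem h hqX)
  · exact hq (by simpa using Y.sub_mem h hpY)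

theorem exists_exclusive {A B K : AddSubgroup G} (hB : B ≠ ⊤) (hK : K ≠ ⊤)
    (hcov : ∀ g : G, g ∈ A ∨ g ∈ B ∨ g ∈ K) :
    ∃ p, p ∈ A ∧ p ∉ B ∧ p ∉ K := by
  by_contra hc
  push_neg at hc
  apply no_two_cover hB hK
  intro g
  rcases hcov g with h | h | h
  · by_cases hgB : g ∈ B
    · exact Or.inl hgB
    · exact Or.inr (hc g h hgB)
  · exact Or.inl h
  · exact Or.inr h

theorem sum_excl_mem {A B K : AddSubgroup G} (hcov : ∀ g : G, g ∈ A ∨ g ∈ B ∨ g ∈ K)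
    {p q : G} (hpA : p ∈ A) (hpB : p ∉ B) (hqB : q ∈ B) (hqA : q ∉ A) :
    p + q ∈ K := by
  rcases hcov (p + q) with h | h | h
  · exact absurd (by simpa using A.sub_mem h hpA) hqA
  · exact absurd (by simpa using B.sub_mem h hqB) hpB
  · exact h

theorem inter_step {A B K : AddSubgroup G} (hcov : ∀ g : G, g ∈ A ∨ g ∈ B ∨ g ∈ K)
    {p q : G} (hpA : p ∈ A) (hpB : p ∉ B) (hpK : p ∉ K)
    (hqB : q ∈ B) (hqA : q ∉ A) (hqK : q ∉ K) :
    ∀ w, w ∈ A → w ∈ B → w ∈ K := by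
  intro w hwA hwB
  by_contra hwK
  have hpq : p + q ∈ K := sum_excl_mem hcov hpA hpB hqB hqA
  rcases hcov (w + (p + q)) with h | h | h
  · have : p + q ∈ A := by simpa using A.sub_mem h hwA
    exact hqA (by simpa using A.sub_mem this hpA)
  · have : p + q ∈ B := by simpa using B.sub_mem h hwB
    exact hpB (by simpa using B.sub_mem this hqB)
  · exact hwK (by simpa using K.sub_mem h hpq)

theorem step_sub_mem {A B K : AddSubgroup G} (hcov : ∀ g : G, g ∈ A ∨ g ∈ B ∨ g ∈ K)
    {p q t : G} (hpA : p ∈ A) (hpB : p ∉ B) (hpK : p ∉ K)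
    (hqB : q ∈ B) (hqA : q ∉ A) (hqK : q ∉ K)
    (htK : t ∈ K) (htA : t ∉ A) (htB : t ∉ B)
    {r : G} (hrA : r ∈ A) (hrB : r ∉ B) (hrK : r ∉ K) :
    r - p ∈ B ∧ r - p ∈ K := by
  have hcov' : ∀ g : G, g ∈ A ∨ g ∈ K ∨ g ∈ B := by
    intro g; rcases hcov g with h | h | h
    exacts [Or.inl h, Or.inr (Or.inr h), Or.inr (Or.inl h)]
  have hpq : p + q ∈ K := sum_excl_mem hcov hpA hpB hqB hqA
  have hrq : r + q ∈ K := sum_excl_mem hcov hrA hrB hqB hqA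
  have hpt : p + t ∈ B := sum_excl_mem hcov' hpA hpK htK htA
  have hrt : r + t ∈ B := sum_excl_mem hcov' hrA hrK htK htA
  constructor
  · have := B.sub_mem hrt hpt
    simpa using this
  · have := K.sub_mem hrq hpq
    simpa using this

end CoverLemma

theorem central_of_rCentralizer_eq_univ {r : R} (h : rCentralizer r = Set.univ) :
    r ∈ rCenter R := by
  intro t
  have : t ∈ rCentralizer r := h ▸ Set.mem_univ t
  exact (mem_rCentralizer.mp this).symm

theorem CS_ne_top_of_ne_univ {r : R} (h : rCentralizer r ≠ Set.univ) : CS r ≠ ⊤ := by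
  intro he
  apply h
  have h2 : (CS r : Set R) = ((⊤ : AddSubgroup R) : Set R) := by rw [he]
  rw [AddSubgroup.coe_top] at h2
  exact h2

/-- From `|Cent R| = 4` and noncommutativity, `|R| = 4 |Z|`. -/
theorem key_of_Cent (hC : (Cent R).ncard = 4) (h : ∃ x y : R, x * y ≠ y * x) :
    Fintype.card R = 4 * (rCenter R).ncard := by
  classical
  have huniv : Set.univ ∈ Cent R := ⟨0, rCentralizer_eq_univ_of_central zero_mem_rCenter⟩
  have h3 : (Cent R \ {Set.univ}).ncard = 3 := by
    rw [Set.ncard_diff_singleton_of_mem huniv, hC]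
  obtain ⟨A, B, K, hAB, hAK, hBK, hP⟩ := Set.ncard_eq_three.mp h3
  have hCent_eq : Cent R = insert Set.univ {A, B, K} := by
    rw [← hP, Set.insert_diff_singleton, Set.insert_eq_self.mpr huniv]
  have hmem : ∀ S ∈ ({A, B, K} : Set (Set R)), S ∈ Cent R ∧ S ≠ Set.univ := by
    intro S hS
    have : S ∈ Cent R \ {Set.univ} := hP ▸ hS
    exact ⟨this.1, by simpa using this.2⟩
  obtain ⟨hA, hAne⟩ := hmem A (by left; rfl)
  obtain ⟨hB, hBne⟩ := hmem B (by right; left; rfl)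
  obtain ⟨hK, hKne⟩ := hmem K (by right; right; rfl)
  obtain ⟨a1, ha1⟩ := hA
  obtain ⟨b1, hb1⟩ := hB
  obtain ⟨k1, hk1⟩ := hK
  simp only at ha1 hb1 hk1
  have hAtop : CS a1 ≠ ⊤ := CS_ne_top_of_ne_univ (ha1 ▸ hAne)
  have hBtop : CS b1 ≠ ⊤ := CS_ne_top_of_ne_univ (hb1 ▸ hBne)
  have hKtop : CS k1 ≠ ⊤ := CS_ne_top_of_ne_univ (hk1 ▸ hKne)
  -- the three proper centralizers cover R
  have hcov : ∀ g : R, g ∈ CS a1 ∨ g ∈ CS b1 ∨ g ∈ CS k1 := by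
    intro g
    by_cases hg : g ∈ rCenter R
    · exact Or.inl (center_subset_rCentralizer a1 hg)
    · have hgC : rCentralizer g ∈ Cent R \ {Set.univ} := by
        refine ⟨⟨g, rfl⟩, ?_⟩
        simp only [Set.mem_singleton_iff]
        intro he
        exact hg (central_of_rCentralizer_eq_univ he)
      rw [hP] at hgC
      have hgg : g ∈ rCentralizer g := self_mem_rCentralizer g
      rcases hgC with h1 | h1 | h1
      · left; show g ∈ rCentralizer a1; rw [ha1, ← h1]; exact hgg
      · right; left; show g ∈ rCentralizer b1; rw [hb1, ← h1]; exact hgg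
      · right; right; show g ∈ rCentralizer k1; rw [hk1, ← h1]; exact hgg
  -- triple intersection is the center
  have hIZ : ∀ x : R, x ∈ CS a1 → x ∈ CS b1 → x ∈ CS k1 → x ∈ rCenter R := by
    intro x hxa hxb hxk r
    have hrC : rCentralizer r ∈ Cent R := ⟨r, rfl⟩
    rw [hCent_eq] at hrC
    have hx : x ∈ rCentralizer r := by
      rcases hrC with h1 | h1 | h1 | h1
      · rw [h1]; trivial
      · rw [h1, ← ha1]; exact hxa
      · rw [h1, ← hb1]; exact hxb
      · rw [h1, ← hk1]; exact hxk
    exact hx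
  -- exclusive elements
  obtain ⟨p, hpA, hpB, hpK⟩ := exists_exclusive hBtop hKtop hcov
  obtain ⟨q, hqB, hqA, hqK⟩ := exists_exclusive hAtop hKtop (by
    intro g; rcases hcov g with h1 | h1 | h1
    exacts [Or.inr (Or.inl h1), Or.inl h1, Or.inr (Or.inr h1)])
  obtain ⟨t, htK, htA, htB⟩ := exists_exclusive hAtop hBtop (by
    intro g; rcases hcov g with h1 | h1 | h1
    exacts [Or.inr (Or.inl h1), Or.inr (Or.inr h1), Or.inl h1])
  -- pairwise intersections lie in the center
  have hABK : ∀ w, w ∈ CS a1 → w ∈ CS b1 → w ∈ CS k1 :=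
    inter_step hcov hpA hpB hpK hqB hqA hqK
  have hAKB : ∀ w, w ∈ CS a1 → w ∈ CS k1 → w ∈ CS b1 :=
    inter_step (by
      intro g; rcases hcov g with h1 | h1 | h1
      exacts [Or.inl h1, Or.inr (Or.inr h1), Or.inr (Or.inl h1)])
      hpA hpK hpB htK htA htB
  have hBKA : ∀ w, w ∈ CS b1 → w ∈ CS k1 → w ∈ CS a1 :=
    inter_step (by
      intro g; rcases hcov g with h1 | h1 | h1
      exacts [Or.inr (Or.inr h1), Or.inl h1, Or.inr (Or.inl h1)])
      hqB hqK hqA htK htB htA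
  -- noncentral: p q t not central
  have hpZ : p ∉ rCenter R := fun hz => hpB (center_subset_rCentralizer b1 hz)
  have hqZ : q ∉ rCenter R := fun hz => hqA (center_subset_rCentralizer a1 hz)
  have htZ : t ∉ rCenter R := fun hz => htA (center_subset_rCentralizer a1 hz)
  have hAset : rCentralizer a1 = rCenter R ∪ cos p := by
    apply Set.Subset.antisymm
    · intro r hr
      by_cases hrZ : r ∈ rCenter R
      · exact Or.inl hrZ
      · right
        rw [mem_cos]
        have hrB : r ∉ CS b1 := fun hh => hrZ (hIZ r hr hh (hABK r hr hh))
        have hrK : r ∉ CS k1 := fun hh => hrZ (hIZ r hr (hAKB r hr hh) hh)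
        obtain ⟨h1, h2⟩ := step_sub_mem hcov hpA hpB hpK hqB hqA hqK htK htA htB hr hrB hrK
        exact hIZ _ ((CS a1).sub_mem hr hpA) h1 h2
    · apply Set.union_subset (center_subset_rCentralizer a1)
      intro g hg
      rw [mem_cos] at hg
      have : g = p + (g - p) := by abel
      show g ∈ CS a1
      rw [this]
      exact (CS a1).add_mem hpA (center_subset_rCentralizer a1 hg)
  have hBset : rCentralizer b1 = rCenter R ∪ cos q := by
    apply Set.Subset.antisymm
    · intro r hr
      by_cases hrZ : r ∈ rCenter R
      · exact Or.inl hrZ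
      · right
        rw [mem_cos]
        have hrA : r ∉ CS a1 := fun hh => hrZ (hIZ r hh hr (hABK r hh hr))
        have hrK : r ∉ CS k1 := fun hh => hrZ (hIZ r (hBKA r hr hh) hr hh)
        have hcov' : ∀ g : R, g ∈ CS b1 ∨ g ∈ CS a1 ∨ g ∈ CS k1 := by
          intro g; rcases hcov g with h1 | h1 | h1
          exacts [Or.inr (Or.inl h1), Or.inl h1, Or.inr (Or.inr h1)]
        obtain ⟨h1, h2⟩ := step_sub_mem hcov' hqB hqA hqK hpA hpB hpK htK htB htA hr hrA hrK
        exact hIZ _ h1 ((CS b1).sub_mem hr hqB) h2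
    · apply Set.union_subset (center_subset_rCentralizer b1)
      intro g hg
      rw [mem_cos] at hg
      have : g = q + (g - q) := by abel
      show g ∈ CS b1
      rw [this]
      exact (CS b1).add_mem hqB (center_subset_rCentralizer b1 hg)
  have hKset : rCentralizer k1 = rCenter R ∪ cos t := by
    apply Set.Subset.antisymm
    · intro r hr
      by_cases hrZ : r ∈ rCenter R
      · exact Or.inl hrZ
      · right
        rw [mem_cos]
        have hrA : r ∉ CS a1 := fun hh => hrZ (hIZ r hh (hAKB r hh hr) hr)
        have hrB : r ∉ CS b1 := fun hh => hrZ (hIZ r (hBKA r hh hr) hh hr)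
        have hcov' : ∀ g : R, g ∈ CS k1 ∨ g ∈ CS a1 ∨ g ∈ CS b1 := by
          intro g; rcases hcov g with h1 | h1 | h1
          exacts [Or.inr (Or.inl h1), Or.inr (Or.inr h1), Or.inl h1]
        obtain ⟨h1, h2⟩ := step_sub_mem hcov' htK htA htB hpA hpK hpB hqB hqK hqA hr hrA hrB
        exact hIZ _ h1 h2 ((CS k1).sub_mem hr htK)
    · apply Set.union_subset (center_subset_rCentralizer k1)
      intro g hg
      rw [mem_cos] at hg
      have : g = t + (g - t) := by abel
      show g ∈ CS k1
      rw [this]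
      exact (CS k1).add_mem htK (center_subset_rCentralizer k1 hg)
  -- the four cosets cover R
  have hU : (Set.univ : Set R) = rCenter R ∪ cos p ∪ cos q ∪ cos t := by
    apply Set.Subset.antisymm
    · intro g _
      rcases hcov g with h1 | h1 | h1
      · have : g ∈ rCenter R ∪ cos p := hAset ▸ h1
        rcases this with h2 | h2
        · exact Or.inl (Or.inl (Or.inl h2))
        · exact Or.inl (Or.inl (Or.inr h2))
      · have : g ∈ rCenter R ∪ cos q := hBset ▸ h1
        rcases this with h2 | h2
        · exact Or.inl (Or.inl (Or.inl h2))
        · exact Or.inl (Or.inr h2)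
      · have : g ∈ rCenter R ∪ cos t := hKset ▸ h1
        rcases this with h2 | h2
        · exact Or.inl (Or.inl (Or.inl h2))
        · exact Or.inr h2
    · exact Set.subset_univ _
  -- disjointness and counting
  have hqp : q - p ∉ rCenter R := by
    intro hz
    apply hqA
    have : q = p + (q - p) := by abel
    show q ∈ CS a1
    rw [this]
    exact (CS a1).add_mem hpA (center_subset_rCentralizer a1 hz)
  have htp : t - p ∉ rCenter R := by
    intro hz
    apply htA
    have : t = p + (t - p) := by abel
    show t ∈ CS a1
    rw [this]
    exact (CS a1).add_mem hpA (center_subset_rCentralizer a1 hz)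
  have htq : t - q ∉ rCenter R := by
    intro hz
    apply htB
    have : t = q + (t - q) := by abel
    show t ∈ CS b1
    rw [this]
    exact (CS b1).add_mem hqB (center_subset_rCentralizer b1 hz)
  have hcount : Fintype.card R = 4 * (rCenter R).ncard := by
    have : (Set.univ : Set R).ncard = 4 * (rCenter R).ncard := by
      rw [hU, Set.ncard_union_eq, Set.ncard_union_eq, Set.ncard_union_eq
        (disjoint_center_cos hpZ), ncard_cos, ncard_cos, ncard_cos]
      · ring
      · exact Set.disjoint_union_left.mpr ⟨disjoint_center_cos hqZ, disjoint_cos hqp⟩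
      · exact Set.disjoint_union_left.mpr ⟨Set.disjoint_union_left.mpr
          ⟨disjoint_center_cos htZ, disjoint_cos htp⟩, disjoint_cos htq⟩
    rwa [Set.ncard_univ, Nat.card_eq_fintype_card] at this
  exact hcount

end FourCentAux

/-- A noncommutative finite ring has `|Cent(R)| = 4` iff `d(R) = 5/8`. -/
theorem four_centralizer_iff_commDeg (R : Type*) [NonUnitalRing R] [Fintype R]
    (h : ∃ x y : R, x * y ≠ y * x) :
    (Cent R).ncard = 4 ↔ commDeg R = 5 / 8 := by
  constructor
  · intro hc
    exact FourCentAux.commDeg_eq (FourCentAux.key_of_Cent hc h) h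
  · intro hd
    exact FourCentAux.ncard_Cent_eq_four (FourCentAux.key_of_commDeg hd h) h
end

section
/- Let R be a noncommutative finite (not necessarily unital) ring and let p be the smallest prime dividing the order of R. If d(R) = (p² + p − 1)/p³, then |Cent(R)| = p + 2. -/
section Aux
variable {R : Type*} [NonUnitalRing R]

def cAdd (r : R) : AddSubgroup R where
  carrier := rCentralizer r
  add_mem' := by
    intro a b ha hb
    simp only [rCentralizer, Set.mem_setOf_eq] at *
    rw [mul_add, add_mul, ha, hb]
  zero_mem' := by simp [rCentralizer]
  neg_mem' := by
    intro a ha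
    simp only [rCentralizer, Set.mem_setOf_eq] at *
    rw [mul_neg, neg_mul, ha]

def zAdd (R : Type*) [NonUnitalRing R] : AddSubgroup R where
  carrier := rCenter R
  add_mem' := by
    intro a b ha hb
    simp only [rCenter, Set.mem_setOf_eq] at *
    intro r; rw [mul_add, add_mul, ha, hb]
  zero_mem' := by simp [rCenter]
  neg_mem' := by
    intro a ha
    simp only [rCenter, Set.mem_setOf_eq] at *
    intro r; rw [mul_neg, neg_mul, ha]

lemma mem_cAdd {r s : R} : s ∈ cAdd r ↔ r * s = s * r := Iff.rfl
lemma mem_zAdd {s : R} : s ∈ zAdd R ↔ ∀ r : R, r * s = s * r := Iff.rfl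
lemma cAdd_coe (r : R) : (cAdd r : Set R) = rCentralizer r := rfl
lemma zAdd_coe : (zAdd R : Set R) = rCenter R := rfl
lemma zAdd_le_cAdd (r : R) : zAdd R ≤ cAdd r := fun s hs => (hs r)
lemma self_mem_cAdd (r : R) : r ∈ cAdd r := rfl
lemma mem_cAdd_comm {r s : R} (h : s ∈ cAdd r) : r ∈ cAdd s := h.symm

/-- If R is generated (as add group) by center and one element, then commutative. -/
lemma comm_of_gen (x : R) (hx : ∀ a : R, a ∈ zAdd R ⊔ AddSubgroup.zmultiples x) :
    ∀ a b : R, a * b = b * a := by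
  intro a b
  obtain ⟨c, hc, u, hu, rfl⟩ := AddSubgroup.mem_sup.mp (hx a)
  obtain ⟨c', hc', v, hv, rfl⟩ := AddSubgroup.mem_sup.mp (hx b)
  obtain ⟨k, rfl⟩ := AddSubgroup.mem_zmultiples_iff.mp hu
  obtain ⟨l, rfl⟩ := AddSubgroup.mem_zmultiples_iff.mp hv
  simp only [mul_add, add_mul, smul_mul_assoc, mul_smul_comm, smul_smul, smul_add]
  rw [hc' c, hc x, hc' x, mul_comm k l]
  abel

section Fin
variable {R : Type*} [NonUnitalRing R] [Fintype R]

lemma card_cAdd (r : R) : Nat.card (cAdd r) = (rCentralizer r).ncard := by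
  rw [← cAdd_coe]; exact Nat.card_coe_set_eq _

lemma card_zAdd : Nat.card (zAdd R) = (rCenter R).ncard := by
  rw [← zAdd_coe]; exact Nat.card_coe_set_eq _

lemma centralizer_eq_univ {r : R} (hr : r ∈ rCenter R) : rCentralizer r = Set.univ := by
  ext s; simp only [rCentralizer, Set.mem_setOf_eq, Set.mem_univ, iff_true]
  -- hr : ∀ t, t * r = r * t
  exact (hr s).symm

lemma cAdd_ne_top {r : R} (hr : r ∉ rCenter R) : cAdd r ≠ ⊤ := by
  intro htop
  apply hr
  intro t
  have : t ∈ cAdd r := htop ▸ AddSubgroup.mem_top t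
  exact this.symm

lemma p_mul_card_le {p : ℕ} (hp : p.Prime)
    (hmin : ∀ q : ℕ, q.Prime → q ∣ Fintype.card R → p ≤ q)
    {r : R} (hr : r ∉ rCenter R) :
    p * (rCentralizer r).ncard ≤ Fintype.card R := by
  set i := (cAdd r).index with hi
  have h1 : Nat.card (cAdd r) * i = Nat.card R := AddSubgroup.card_mul_index _
  have h2 : i ∣ Nat.card R := AddSubgroup.index_dvd_card _
  have h3 : i ≠ 1 := fun hone => cAdd_ne_top hr (AddSubgroup.index_eq_one.mp hone)
  have h4 : i ≠ 0 := AddSubgroup.index_ne_zero_of_finite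
  have hq := Nat.minFac_prime h3
  have hpi : p ≤ i := by
    refine le_trans (hmin _ hq ?_) (Nat.minFac_le (Nat.pos_of_ne_zero h4))
    rw [← Nat.card_eq_fintype_card]
    exact dvd_trans (Nat.minFac_dvd i) h2
  calc p * (rCentralizer r).ncard ≤ i * (rCentralizer r).ncard :=
        Nat.mul_le_mul_right _ hpi
    _ = Nat.card R := by rw [← card_cAdd]; rw [mul_comm] at h1; exact h1
    _ = Fintype.card R := Nat.card_eq_fintype_card


lemma lagrange_top (H : AddSubgroup R) : Nat.card H ∣ Nat.card R :=
  ⟨H.index, (AddSubgroup.card_mul_index H).symm⟩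

lemma eq_of_le_of_card_le {H K : AddSubgroup R} (h : H ≤ K) (hc : Nat.card K ≤ Nat.card H) :
    H = K :=
  SetLike.ext' (Set.eq_of_subset_of_ncard_le h (by rw [← Nat.card_coe_set_eq, ← Nat.card_coe_set_eq]; exact hc)
    (Set.toFinite _))

lemma sum_centralizers_eq (p : ℕ) (hp : p.Prime)
    (hd : commDeg R = ((p : ℚ) ^ 2 + p - 1) / (p : ℚ) ^ 3) :
    p ^ 3 * (∑ r : R, (rCentralizer r).ncard) = (p ^ 2 + p - 1) * (Fintype.card R) ^ 2 := by
  have : Nonempty R := ⟨0⟩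
  have hn : (0:ℚ) < (Fintype.card R : ℚ) := by exact_mod_cast Fintype.card_pos
  have hp0 : (0:ℚ) < (p:ℚ) := by exact_mod_cast hp.pos
  set Nn : ℕ := ∑ r : R, (rCentralizer r).ncard with hNn
  rw [commDeg, ← Nat.cast_sum] at hd
  field_simp at hd
  rw [← hNn] at hd
  have h1 : (1:ℕ) ≤ p^2 + p := le_trans hp.pos (Nat.le_add_left p (p^2))
  have : ((p ^ 3 * Nn : ℕ) : ℚ) = (((p ^ 2 + p - 1) * (Fintype.card R) ^ 2 : ℕ) : ℚ) := by
    push_cast [Nat.cast_sub h1]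
    linarith
  exact_mod_cast this

lemma card_eq_p_sq_mul (h : ∃ x y : R, x * y ≠ y * x) (p : ℕ) (hp : p.Prime)
    (hmin : ∀ q : ℕ, q.Prime → q ∣ Fintype.card R → p ≤ q)
    (hd : commDeg R = ((p : ℚ) ^ 2 + p - 1) / (p : ℚ) ^ 3) :
    Fintype.card R = p ^ 2 * (rCenter R).ncard := by
  classical
  have : Nonempty R := ⟨0⟩
  set n := Fintype.card R with hn_def
  set z := (rCenter R).ncard with hz_def
  set N := ∑ r : R, (rCentralizer r).ncard with hN_def
  obtain ⟨x, y, hxy⟩ := h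
  have hy : y ∉ rCenter R := fun hyc => hxy (hyc x)
  have hnpos : 0 < n := Fintype.card_pos
  have hzpos : 0 < z := by
    rw [hz_def, Set.ncard_pos (Set.toFinite _)]
    exact ⟨0, (zAdd R).zero_mem⟩
  have hzn : z ≤ n := by
    rw [hz_def, hn_def]
    have := Set.ncard_le_ncard (Set.subset_univ (rCenter R)) (Set.toFinite _)
    simpa [Set.ncard_univ, Nat.card_eq_fintype_card] using this
  -- the finset of central elements
  set s : Finset R := Finset.univ.filter (· ∈ rCenter R) with hs_def
  have hs_card : s.card = z := by
    rw [hz_def, Set.ncard_eq_toFinset_card']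
    congr 1
    ext r
    simp [hs_def, Set.mem_toFinset]
  have hsc_card : (Finset.univ.filter (fun x => x ∉ rCenter R)).card = n - z := by
    rw [Finset.filter_not, Finset.card_sdiff_of_subset (Finset.filter_subset _ _), Finset.card_univ,
      ← hn_def, ← hs_def, hs_card]
  -- sum bound
  have hsplit : p * N ≤ z * (p * n) + (n - z) * n := by
    have hsum := (Finset.sum_filter_add_sum_filter_not Finset.univ (· ∈ rCenter R)
      (fun r => p * (rCentralizer r).ncard)).symm
    have e1 : ∑ r ∈ s, p * (rCentralizer r).ncard = z * (p * n) := by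
      have hall : ∀ r ∈ s, p * (rCentralizer r).ncard = p * n := by
        intro r hr
        have hr' : r ∈ rCenter R := by simpa [hs_def] using hr
        rw [centralizer_eq_univ hr', Set.ncard_univ, Nat.card_eq_fintype_card]
      rw [Finset.sum_congr rfl hall, Finset.sum_const, smul_eq_mul, hs_card]
    have e2 : ∑ r ∈ Finset.univ.filter (fun x => x ∉ rCenter R), p * (rCentralizer r).ncard
        ≤ (n - z) * n := by
      rw [← hsc_card]
      calc ∑ r ∈ Finset.univ.filter (fun x => x ∉ rCenter R), p * (rCentralizer r).ncard
          ≤ ∑ _r ∈ Finset.univ.filter (fun x => x ∉ rCenter R), n :=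
            Finset.sum_le_sum (fun r hr => p_mul_card_le hp hmin
              (by simpa using (Finset.mem_filter.mp hr).2))
        _ = _ := by rw [Finset.sum_const, smul_eq_mul]
    calc p * N = ∑ r : R, p * (rCentralizer r).ncard := by rw [hN_def, Finset.mul_sum]
      _ = _ + _ := hsum
      _ ≤ z * (p * n) + (n - z) * n := Nat.add_le_add (le_of_eq e1) e2
  -- rational inequality
  have hkey := sum_centralizers_eq p hp hd
  rw [← hN_def, ← hn_def] at hkey
  have hp2 : (2:ℚ) ≤ (p:ℚ) := by exact_mod_cast hp.two_le
  have hn1 : (1:ℚ) ≤ (n:ℚ) := by exact_mod_cast hnpos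
  have hz1 : (1:ℚ) ≤ (z:ℚ) := by exact_mod_cast hzpos
  have h1 : (1:ℕ) ≤ p^2 + p := le_trans hp.pos (Nat.le_add_left p (p^2))
  have hq1 : (p:ℚ)^3 * (N:ℚ) = ((p:ℚ)^2 + (p:ℚ) - 1) * (n:ℚ)^2 := by
    have h2 := congrArg (fun k : ℕ => (k : ℚ)) hkey
    push_cast [Nat.cast_sub h1] at h2
    linarith
  have hq2 : (p:ℚ) * (N:ℚ) ≤ (z:ℚ) * ((p:ℚ) * n) + ((n:ℚ) - z) * n := by
    have h2 : ((p * N : ℕ) : ℚ) ≤ ((z * (p * n) + (n - z) * n : ℕ) : ℚ) := by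
      exact_mod_cast hsplit
    push_cast [Nat.cast_sub hzn] at h2
    linarith
  have hle : (n:ℚ) ≤ (p:ℚ)^2 * (z:ℚ) := by
    nlinarith [mul_le_mul_of_nonneg_left hq2 (by positivity : (0:ℚ) ≤ (p:ℚ)^2),
      mul_pos (by linarith : (0:ℚ) < (p:ℚ) - 1) (by linarith : (0:ℚ) < (n:ℚ))]
  have hleN : n ≤ p ^ 2 * z := by exact_mod_cast hle
  -- index of the center
  set m := (zAdd R).index with hm_def
  have hzm : z * m = n := by
    rw [hz_def, hn_def, ← card_zAdd, ← Nat.card_eq_fintype_card]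
    exact AddSubgroup.card_mul_index _
  have hm1 : m ≠ 1 := by
    intro h1
    have : zAdd R = ⊤ := AddSubgroup.index_eq_one.mp h1
    have h2 : y ∈ zAdd R := by rw [this]; exact AddSubgroup.mem_top y
    exact hy h2
  have hmn : m ∣ n := by
    rw [hn_def, ← Nat.card_eq_fintype_card]; exact AddSubgroup.index_dvd_card _
  have hm_le : m ≤ p ^ 2 := by
    have : z * m ≤ z * p ^ 2 := by rw [hzm]; linarith [hleN]
    exact Nat.le_of_mul_le_mul_left this hzpos
  have hm0 : m ≠ 0 := by
    intro h0; rw [h0, mul_zero] at hzm; omega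
  have hprime_ge : ∀ q : ℕ, q.Prime → q ∣ m → p ≤ q := fun q hq hqm =>
    hmin q hq (hqm.trans hmn)
  -- m is not prime
  have hm_not_prime : ¬ m.Prime := by
    intro hmp
    -- then R would be commutative
    set K : AddSubgroup R := zAdd R ⊔ AddSubgroup.zmultiples y with hK_def
    have hyK : y ∈ K := AddSubgroup.mem_sup_right (AddSubgroup.mem_zmultiples y)
    have hZK : zAdd R ≤ K := le_sup_left
    have h1 : Nat.card (zAdd R) ∣ Nat.card K := AddSubgroup.card_dvd_of_le hZK
    rw [card_zAdd] at h1
    have h2 : Nat.card K ∣ n := by rw [hn_def, ← Nat.card_eq_fintype_card]; exact lagrange_top K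
    have h3 : z < Nat.card K := by
      have e1 : Nat.card K = ((K : Set R)).ncard := Nat.card_coe_set_eq (K : Set R)
      rw [hz_def, e1]
      exact Set.ncard_lt_ncard ⟨SetLike.coe_subset_coe.mpr hZK,
        fun hsub => hy (hsub hyK)⟩ (Set.toFinite _)
    obtain ⟨t, ht⟩ := h1
    have htm : t ∣ m := by
      have : z * t ∣ z * m := by rw [← ht, hzm]; exact h2
      exact (mul_dvd_mul_iff_left (by omega : z ≠ 0)).mp this
    rcases (Nat.Prime.eq_one_or_self_of_dvd hmp t htm) with ht1 | htm'
    · rw [ht1, mul_one] at ht; omega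
    · have hcardK : Nat.card K = Nat.card R := by
        rw [ht, htm', Nat.card_eq_fintype_card, ← hn_def]
        exact hzm
      have hKtop : K = ⊤ := AddSubgroup.eq_top_of_card_eq K hcardK
      have hcomm := comm_of_gen y (fun a => by rw [hK_def] at hKtop; rw [hKtop]; exact AddSubgroup.mem_top a)
      exact hxy (hcomm x y)
  -- hence m = p ^ 2
  have hm_eq : m = p ^ 2 := by
    have ha := Nat.minFac_prime hm1
    have hpa : p ≤ m.minFac := hprime_ge _ ha (Nat.minFac_dvd m)
    set b := m / m.minFac with hb_def
    have hab : m.minFac * b = m := Nat.mul_div_cancel' (Nat.minFac_dvd m)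
    have hb1 : b ≠ 1 := by
      intro h1; rw [h1, mul_one] at hab; exact hm_not_prime (hab ▸ ha)
    have hb0 : b ≠ 0 := by intro h0; rw [h0, mul_zero] at hab; exact hm0 hab.symm
    have hbm : b ∣ m := ⟨m.minFac, by rw [mul_comm]; exact hab.symm⟩
    have hpb : p ≤ b := by
      have hbq := Nat.minFac_prime hb1
      have := hprime_ge _ hbq ((Nat.minFac_dvd b).trans hbm)
      exact le_trans this (Nat.minFac_le (Nat.pos_of_ne_zero hb0))
    have : p ^ 2 ≤ m := by
      calc p ^ 2 = p * p := sq p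
        _ ≤ m.minFac * b := Nat.mul_le_mul hpa hpb
        _ = m := hab
    omega
  rw [← hzm, hm_eq, mul_comm]

lemma centralizer_card_eq (h : ∃ x y : R, x * y ≠ y * x) (p : ℕ) (hp : p.Prime)
    (hmin : ∀ q : ℕ, q.Prime → q ∣ Fintype.card R → p ≤ q)
    (hd : commDeg R = ((p : ℚ) ^ 2 + p - 1) / (p : ℚ) ^ 3) :
    ∀ r : R, r ∉ rCenter R → (rCentralizer r).ncard = p * (rCenter R).ncard := by
  classical
  have : Nonempty R := ⟨0⟩
  set n := Fintype.card R with hn_def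
  set z := (rCenter R).ncard with hz_def
  have hnz : n = p ^ 2 * z := card_eq_p_sq_mul h p hp hmin hd
  have hzpos : 0 < z := by
    rw [hz_def, Set.ncard_pos (Set.toFinite _)]
    exact ⟨0, (zAdd R).zero_mem⟩
  set s : Finset R := Finset.univ.filter (· ∈ rCenter R) with hs_def
  set sc : Finset R := Finset.univ.filter (fun x => x ∉ rCenter R) with hsc_def
  have hs_card : s.card = z := by
    rw [hz_def, Set.ncard_eq_toFinset_card']
    congr 1
    ext r
    simp [hs_def, Set.mem_toFinset]
  have hpart : z + sc.card = n := by
    have := Finset.card_filter_add_card_filter_not (s := (Finset.univ : Finset R))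
      (p := (· ∈ rCenter R))
    rw [Finset.card_univ] at this
    rw [← hs_card]
    exact this
  -- bound on each noncentral centralizer
  have hbound : ∀ r ∈ sc, (rCentralizer r).ncard ≤ p * z := by
    intro r hr
    have hr' : r ∉ rCenter R := by simpa [hsc_def] using (Finset.mem_filter.mp hr).2
    have h1 : p * (rCentralizer r).ncard ≤ n := p_mul_card_le hp hmin hr'
    rw [hnz] at h1
    have : p * (rCentralizer r).ncard ≤ p * (p * z) := by
      calc p * (rCentralizer r).ncard ≤ p ^ 2 * z := h1
        _ = p * (p * z) := by ring
    exact Nat.le_of_mul_le_mul_left this hp.pos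
  -- sum over noncentral elements
  have hkey := sum_centralizers_eq p hp hd
  rw [← hn_def] at hkey
  have hsum := (Finset.sum_filter_add_sum_filter_not Finset.univ (· ∈ rCenter R)
    (fun r => (rCentralizer r).ncard)).symm
  have e1 : ∑ r ∈ s, (rCentralizer r).ncard = z * n := by
    have hall : ∀ r ∈ s, (rCentralizer r).ncard = n := by
      intro r hr
      have hr' : r ∈ rCenter R := by simpa [hs_def] using hr
      rw [centralizer_eq_univ hr', Set.ncard_univ, Nat.card_eq_fintype_card]
    rw [Finset.sum_congr rfl hall, Finset.sum_const, smul_eq_mul, hs_card]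
  set S := ∑ r ∈ sc, (rCentralizer r).ncard with hS_def
  have htot : (∑ r : R, (rCentralizer r).ncard) = z * n + S := by
    rw [hsum, e1]
  rw [htot] at hkey
  -- conclude S = sc.card * (p * z) via rationals
  have hSeq : S = sc.card * (p * z) := by
    have hq : ((S : ℚ)) = ((sc.card : ℚ)) * (p * z) := by
      have hkq : ((p:ℚ))^3 * ((z:ℚ) * n + S) = ((p:ℚ)^2 + p - 1) * (n:ℚ)^2 := by
        have := congrArg (fun k : ℕ => (k : ℚ)) hkey
        have h1 : (1:ℕ) ≤ p^2 + p := le_trans hp.pos (Nat.le_add_left p (p^2))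
        push_cast [Nat.cast_sub h1] at this
        linarith
      have hnq : (n:ℚ) = (p:ℚ)^2 * z := by exact_mod_cast hnz
      have hcq : (z:ℚ) + (sc.card : ℚ) = (n:ℚ) := by exact_mod_cast hpart
      have hppos : (0:ℚ) < (p:ℚ) := by exact_mod_cast hp.pos
      rw [hnq] at hkq
      rw [show (sc.card:ℚ) = (p:ℚ)^2 * z - z by linarith]
      have hp0 : (p:ℚ) ≠ 0 := ne_of_gt hppos
      have h3 : ((p:ℚ)^3) * (S:ℚ) = ((p:ℚ)^3) * (((p:ℚ)^2 * z - z) * ((p:ℚ) * z)) := by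
        linear_combination hkq
      exact mul_left_cancel₀ (pow_ne_zero 3 hp0) h3
    exact_mod_cast hq
  -- each term achieves the bound
  intro r hr
  have hrsc : r ∈ sc := by simp [hsc_def, hr]
  by_contra hne
  have hlt : (rCentralizer r).ncard < p * z :=
    lt_of_le_of_ne (hbound r hrsc) hne
  have hstrict : S < ∑ _r ∈ sc, (p * z) :=
    Finset.sum_lt_sum hbound ⟨r, hrsc, hlt⟩
  rw [Finset.sum_const, smul_eq_mul] at hstrict
  omega

lemma centralizer_eq_centralizer (p : ℕ) (hp : p.Prime)
    (hcard : ∀ r : R, r ∉ rCenter R → (rCentralizer r).ncard = p * (rCenter R).ncard)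
    {r t : R} (hr : r ∉ rCenter R) (ht : t ∉ rCenter R) (hrt : t ∈ rCentralizer r) :
    rCentralizer t = rCentralizer r := by
  classical
  set z := (rCenter R).ncard with hz_def
  have hzpos : 0 < z := by
    rw [hz_def, Set.ncard_pos (Set.toFinite _)]
    exact ⟨0, (zAdd R).zero_mem⟩
  set I : AddSubgroup R := cAdd r ⊓ cAdd t with hI_def
  have hZI : zAdd R ≤ I := le_inf (zAdd_le_cAdd r) (zAdd_le_cAdd t)
  have hrI : r ∈ I := ⟨self_mem_cAdd r, mem_cAdd_comm hrt⟩
  have hcardI : Nat.card I = ((I : Set R)).ncard := Nat.card_coe_set_eq (I : Set R)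
  have h1 : z ∣ Nat.card I := by
    have := AddSubgroup.card_dvd_of_le hZI
    rwa [card_zAdd] at this
  have h2 : Nat.card I ∣ p * z := by
    have := AddSubgroup.card_dvd_of_le (inf_le_left : I ≤ cAdd r)
    rwa [card_cAdd, hcard r hr] at this
  have h3 : z < Nat.card I := by
    rw [hz_def, hcardI]
    exact Set.ncard_lt_ncard ⟨SetLike.coe_subset_coe.mpr hZI,
      fun hsub => hr (hsub hrI)⟩ (Set.toFinite _)
  obtain ⟨u, hu⟩ := h1
  have hup : u ∣ p := by
    have : z * u ∣ z * p := by rw [← hu, mul_comm z p]; exact h2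
    exact (mul_dvd_mul_iff_left (by omega : z ≠ 0)).mp this
  rcases (Nat.Prime.eq_one_or_self_of_dvd hp u hup) with h | h
  · rw [h, mul_one] at hu; omega
  · have hIcard : Nat.card I = p * z := by rw [hu, h, mul_comm]
    have hIr : I = cAdd r := eq_of_le_of_card_le inf_le_left
      (by rw [card_cAdd, hcard r hr, hIcard])
    have hIt : I = cAdd t := eq_of_le_of_card_le inf_le_right
      (by rw [card_cAdd, hcard t ht, hIcard])
    have : cAdd t = cAdd r := hIt ▸ hIr
    have := congrArg (fun K : AddSubgroup R => (K : Set R)) this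
    simpa [cAdd_coe] using this

end Fin
end Aux

/-- If `p` is the smallest prime dividing `|R|` and `d(R) = (p² + p - 1)/p³`,
then `|Cent(R)| = p + 2`. -/
theorem cent_of_commDeg_eq (R : Type*) [NonUnitalRing R] [Fintype R]
    (h : ∃ x y : R, x * y ≠ y * x) (p : ℕ) (hp : p.Prime) (hdvd : p ∣ Fintype.card R)
    (hmin : ∀ q : ℕ, q.Prime → q ∣ Fintype.card R → p ≤ q)
    (hd : commDeg R = ((p : ℚ) ^ 2 + p - 1) / (p : ℚ) ^ 3) :
    (Cent R).ncard = p + 2 := by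
  classical
  have : Nonempty R := ⟨0⟩
  set n := Fintype.card R with hn_def
  set z := (rCenter R).ncard with hz_def
  have hnz : n = p ^ 2 * z := card_eq_p_sq_mul h p hp hmin hd
  have hcard := centralizer_card_eq h p hp hmin hd
  have hzpos : 0 < z := by
    rw [hz_def, Set.ncard_pos (Set.toFinite _)]
    exact ⟨0, (zAdd R).zero_mem⟩
  have hp2 := hp.two_le
  -- finset versions
  set f : R → Finset R := fun r => Finset.univ.filter (fun s => r * s = s * r) with hf_def
  have hf_coe : ∀ r : R, ((f r : Set R)) = rCentralizer r := by
    intro r; ext s; simp [hf_def, rCentralizer]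
  have hf_card : ∀ r : R, r ∉ rCenter R → (f r).card = p * z := by
    intro r hr
    have := hcard r hr
    rwa [← hf_coe, Set.ncard_coe_finset] at this
  have hmemf : ∀ r : R, r ∈ f r := by intro r; simp [hf_def]
  have hfmem : ∀ r s : R, s ∈ f r ↔ r * s = s * r := by intro r s; simp [hf_def]
  set Zf : Finset R := Finset.univ.filter (· ∈ rCenter R) with hZf_def
  have hZf_card : Zf.card = z := by
    rw [hz_def, Set.ncard_eq_toFinset_card']
    congr 1
    ext r
    simp [hZf_def, Set.mem_toFinset]
  have hZf_sub : ∀ r : R, Zf ⊆ f r := by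
    intro r t ht
    have ht' : t ∈ rCenter R := by simpa [hZf_def] using ht
    exact (hfmem r t).mpr (ht' r)
  set sc : Finset R := Finset.univ.filter (fun x => x ∉ rCenter R) with hsc_def
  have hsc_mem : ∀ r : R, r ∈ sc ↔ r ∉ rCenter R := by intro r; simp [hsc_def]
  have hpart : z + sc.card = n := by
    have := Finset.card_filter_add_card_filter_not (s := (Finset.univ : Finset R))
      (p := (· ∈ rCenter R))
    rw [Finset.card_univ] at this
    rw [← hZf_card]
    exact this
  set T : Finset (Finset R) := sc.image f with hT_def
  -- each block has size p*z - z
  have hblock : ∀ A ∈ T, (A \ Zf).card = p * z - z := by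
    intro A hA
    obtain ⟨r, hr, rfl⟩ := Finset.mem_image.mp hA
    rw [Finset.card_sdiff_of_subset (hZf_sub r), hZf_card, hf_card r ((hsc_mem r).mp hr)]
  -- the blocks cover sc
  have hcover : sc = T.biUnion (fun A => A \ Zf) := by
    ext t
    constructor
    · intro ht
      refine Finset.mem_biUnion.mpr ⟨f t, Finset.mem_image_of_mem f ht, ?_⟩
      refine Finset.mem_sdiff.mpr ⟨hmemf t, ?_⟩
      intro htZ
      exact ((hsc_mem t).mp ht) (by simpa [hZf_def] using htZ)
    · intro ht
      obtain ⟨A, hA, htA⟩ := Finset.mem_biUnion.mp ht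
      have : t ∉ Zf := (Finset.mem_sdiff.mp htA).2
      exact (hsc_mem t).mpr (fun hc => this (by simp [hZf_def, hc]))
  -- blocks are pairwise disjoint
  have hdisj : ∀ A ∈ T, ∀ B ∈ T, A ≠ B → Disjoint (A \ Zf) (B \ Zf) := by
    intro A hA B hB hAB
    obtain ⟨a, ha, rfl⟩ := Finset.mem_image.mp hA
    obtain ⟨b, hb, rfl⟩ := Finset.mem_image.mp hB
    rw [Finset.disjoint_left]
    intro t htA htB
    have htZ : t ∉ rCenter R := fun hc => (Finset.mem_sdiff.mp htA).2 (by simp [hZf_def, hc])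
    have hta : t ∈ rCentralizer a := (hfmem a t).mp (Finset.mem_sdiff.mp htA).1
    have htb : t ∈ rCentralizer b := (hfmem b t).mp (Finset.mem_sdiff.mp htB).1
    have e1 := centralizer_eq_centralizer p hp hcard ((hsc_mem a).mp ha) htZ hta
    have e2 := centralizer_eq_centralizer p hp hcard ((hsc_mem b).mp hb) htZ htb
    apply hAB
    have : rCentralizer a = rCentralizer b := by rw [← e1, ← e2]
    have := congrArg (fun C : Set R => C) this
    rw [← hf_coe, ← hf_coe] at this
    exact Finset.coe_injective this
  -- count the blocks
  have hcount : sc.card = T.card * (p * z - z) := by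
    rw [hcover, Finset.card_biUnion hdisj]
    rw [Finset.sum_congr rfl hblock, Finset.sum_const, smul_eq_mul]
  have hTcard : T.card = p + 1 := by
    have hzle : z ≤ p * z := Nat.le_mul_of_pos_left z hp.pos
    set d := p * z - z with hd_def
    have hd : z + d = p * z := by omega
    have hdpos : 0 < d := by
      have : 2 * z ≤ p * z := Nat.mul_le_mul_right z hp2
      omega
    have key : z + (p + 1) * d = n := by
      calc z + (p + 1) * d = p * d + (z + d) := by ring
        _ = p * d + p * z := by rw [hd]
        _ = p * (z + d) := by ring
        _ = p * (p * z) := by rw [hd]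
        _ = n := by rw [hnz]; ring
    have key2 : T.card * d = (p + 1) * d := by omega
    exact Nat.eq_of_mul_eq_mul_right hdpos key2
  -- identify Cent R
  have hcent : Cent R = (fun A : Finset R => (A : Set R)) '' ↑(insert Finset.univ T) := by
    ext C
    constructor
    · rintro ⟨r, rfl⟩
      by_cases hr : r ∈ rCenter R
      · refine ⟨Finset.univ, by simp, ?_⟩
        simp only [Finset.coe_univ]
        exact (centralizer_eq_univ hr).symm
      · refine ⟨f r, ?_, hf_coe r⟩
        simp only [Finset.coe_insert, Set.mem_insert_iff, Finset.mem_coe]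
        exact Or.inr (Finset.mem_image.mpr ⟨r, (hsc_mem r).mpr hr, rfl⟩)
    · rintro ⟨A, hA, rfl⟩
      rcases Finset.mem_insert.mp (by exact_mod_cast hA) with h1 | h2
      · subst h1
        refine ⟨0, ?_⟩
        have h0 : (0:R) ∈ rCenter R := (zAdd R).zero_mem
        show rCentralizer (0:R) = ((Finset.univ : Finset R) : Set R)
        rw [centralizer_eq_univ h0, Finset.coe_univ]
      · obtain ⟨r, _, rfl⟩ := Finset.mem_image.mp h2
        exact ⟨r, (hf_coe r).symm⟩
  -- univ is not a proper centralizer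
  have huniv : Finset.univ ∉ T := by
    intro hu
    have := hblock _ hu
    rw [Finset.card_sdiff_of_subset (by intro t _; exact Finset.mem_univ t), Finset.card_univ,
      hZf_card, ← hn_def] at this
    have hzle : z ≤ p * z := Nat.le_mul_of_pos_left z hp.pos
    -- n - z = p*z - z, but n = p^2 z > p z
    have hlt : p * z < n := by
      rw [hnz]
      have : 2 * (p * z) ≤ p * (p * z) := Nat.mul_le_mul_right (p*z) hp2
      have hpz : 0 < p * z := Nat.mul_pos hp.pos hzpos
      calc p * z < 2 * (p * z) := by omega
        _ ≤ p * (p * z) := this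
        _ = p ^ 2 * z := by ring
    omega
  rw [hcent, Set.ncard_image_of_injective _ Finset.coe_injective, Set.ncard_coe_finset,
    Finset.card_insert_of_notMem huniv, hTcard]
end
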